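/- Let K be a field and let f, g ∈ K[x₁,…,xₙ] be nonzero polynomials. Define the Newton polytope New(f) as the convex hull in ℝⁿ of the support of f. Then New(f·g) = New(f) + New(g), where + denotes Minkowski sum. -/

import Mathlib

open MvPolynomial Pointwise

/-- The Newton polytope of a polynomial: the convex hull of its support in ℝⁿ. -/
noncomputable def newtonPolytope {K : Type*} [Field K] {n : ℕ}
    (f : MvPolynomial (Fin n) K) : Set (Fin n → ℝ) :=
  convexHull ℝ ((fun α : Fin n →₀ ℕ => fun i => (α i : ℝ)) '' (f.support : Set (Fin n →₀ ℕ)))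

private noncomputable def phi {n : ℕ} : (Fin n →₀ ℕ) → (Fin n → ℝ) :=
  fun α => fun i => (α i : ℝ)

private theorem phi_add {n : ℕ} (a b : Fin n →₀ ℕ) : phi (a + b) = phi a + phi b := by
  funext i; simp [phi]

private theorem phi_inj {n : ℕ} : Function.Injective (phi (n := n)) := by
  intro a b h
  ext i
  have := congrFun h i
  simp only [phi] at this
  exact_mod_cast this

theorem newtonPolytope_mul {K : Type*} [Field K] {n : ℕ}
    (f g : MvPolynomial (Fin n) K) (hf : f ≠ 0) (hg : g ≠ 0) :
    newtonPolytope (f * g) = newtonPolytope f + newtonPolytope g := by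
  classical
  set A : Set (Fin n → ℝ) := phi '' (f.support : Set (Fin n →₀ ℕ)) with hA
  set B : Set (Fin n → ℝ) := phi '' (g.support : Set (Fin n →₀ ℕ)) with hB
  set C : Set (Fin n → ℝ) := phi '' ((f * g).support : Set (Fin n →₀ ℕ)) with hC
  have hCsub : C ⊆ A + B := by
    rintro x ⟨α, hα, rfl⟩
    have h1 : (f * g).support ⊆ f.support + g.support := support_mul f g
    have := h1 hα
    rw [Finset.mem_add] at this
    obtain ⟨a, ha, b, hb, rfl⟩ := this
    rw [phi_add]
    exact Set.add_mem_add ⟨a, ha, rfl⟩ ⟨b, hb, rfl⟩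
  -- key: extreme points of convexHull (A+B) lie in C
  have hABfin : (A + B).Finite := by
    apply Set.Finite.add <;> exact Set.Finite.image _ (Finset.finite_toSet _)
  have hext : (convexHull ℝ (A + B)).extremePoints ℝ ⊆ C := by
    intro x hx
    have hxAB : x ∈ A + B := extremePoints_convexHull_subset hx
    obtain ⟨_, ⟨α, hα, rfl⟩, _, ⟨β, hβ, rfl⟩, rfl⟩ := hxAB
    refine ⟨α + β, ?_, by simpa using phi_add α β⟩
    rw [Finset.mem_coe, mem_support_iff, coeff_mul]
    have huniq : ∀ a b : Fin n →₀ ℕ, a ∈ f.support → b ∈ g.support →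
        a + b = α + β → a = α ∧ b = β := by
      intro a b ha hb hab
      have hu : phi a + phi β ∈ A + B := ⟨phi a, ⟨a, ha, rfl⟩, phi β, ⟨β, hβ, rfl⟩, rfl⟩
      have hv : phi α + phi b ∈ A + B := ⟨phi α, ⟨α, hα, rfl⟩, phi b, ⟨b, hb, rfl⟩, rfl⟩
      have hab' : phi a + phi b = phi α + phi β := by
        have := congrArg phi hab
        rwa [phi_add, phi_add] at this
      have heq : phi a + phi β = phi α + phi β := by
        by_contra hne
        have hmem : phi α + phi β ∈ openSegment ℝ (phi a + phi β) (phi α + phi b) := by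
          refine ⟨1/2, 1/2, by norm_num, by norm_num, by norm_num, ?_⟩
          rw [show (1/2 : ℝ) • (phi a + phi β) + (1/2 : ℝ) • (phi α + phi b)
              = (1/2 : ℝ) • (phi a + phi b) + (1/2 : ℝ) • (phi β + phi α) by module, hab']
          module
        obtain ⟨h1, h2⟩ := (mem_extremePoints.1 hx).2 _ (subset_convexHull ℝ _ hu) _ (subset_convexHull ℝ _ hv) hmem
        exact hne (by simpa using h1)
      have haα : a = α := phi_inj (by
        have := heq
        funext i
        have := congrFun heq i
        simpa using this)
      subst haα
      have : b = β := by
        have : a + b = a + β := hab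
        exact add_left_cancel this
      exact ⟨rfl, this⟩
    rw [Finset.sum_eq_single (α, β)]
    · exact mul_ne_zero (mem_support_iff.mp hα) (mem_support_iff.mp hβ)
    · rintro ⟨a, b⟩ hmem hne
      rw [Finset.HasAntidiagonal.mem_antidiagonal] at hmem
      by_cases ha : a ∈ f.support
      · by_cases hb : b ∈ g.support
        · obtain ⟨h1, h2⟩ := huniq a b ha hb hmem
          exact absurd (Prod.ext h1 h2) hne
        · simp [notMem_support_iff.mp hb]
      · simp [notMem_support_iff.mp ha]
    · intro h
      rw [Finset.HasAntidiagonal.mem_antidiagonal] at h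
      exact absurd rfl h
  have hcompAB : IsCompact (convexHull ℝ (A + B)) := hABfin.isCompact_convexHull ℝ
  have key : convexHull ℝ (A + B) ⊆ convexHull ℝ C := by
    have hKM := closure_convexHull_extremePoints hcompAB (convex_convexHull ℝ _)
    calc convexHull ℝ (A + B) = closure (convexHull ℝ ((convexHull ℝ (A + B)).extremePoints ℝ)) :=
          hKM.symm
      _ ⊆ closure (convexHull ℝ C) := closure_mono (convexHull_mono hext)
      _ = convexHull ℝ C := by
          refine IsClosed.closure_eq ?_
          exact (Set.Finite.isCompact_convexHull ℝ
            (Set.Finite.image _ (Finset.finite_toSet _))).isClosed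
  have : convexHull ℝ C = convexHull ℝ (A + B) :=
    Set.Subset.antisymm (convexHull_mono hCsub) key
  show convexHull ℝ C = convexHull ℝ A + convexHull ℝ B
  rw [this, convexHull_add]
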